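/- Let ℳ'_order be the variant of ℳ_order in which Step 1 instead draws the national packing 𝒞_nat at random according to a fixed probability distribution p* on the set of all maximum national Γ-cycle packings of (G,V) (where p* depends only on (G,V) and the national cycle-limit vector ncl), independently of all other random choices. Then ℳ'_order is individually rational and incentive compatible. -/

import Mathlib

open scoped Classical

/-- An `n`-partitioned compatibility graph: a finite directed graph on a finite
set of natural-number vertices, without self-loops, whose vertex set is
partitioned into `n` nonempty countries. -/
structure PartGraph (n : ℕ) where
  verts : Finset ℕ
  arcs : Finset (ℕ × ℕ)
  arcs_mem : ∀ p ∈ arcs, p.1 ∈ verts ∧ p.2 ∈ verts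
  no_loops : ∀ v, (v, v) ∉ arcs
  country : ℕ → Fin n
  country_nonempty : ∀ i : Fin n, ∃ v ∈ verts, country v = i

/-- Cyclic access to the entries of a list. -/
def cyc (l : List ℕ) (k : ℕ) : ℕ := l.getD (k % l.length) 0

/-- `l` is a (directed) cycle of `G`: a cyclic sequence of at least two distinct
vertices, consecutive ones (cyclically) joined by arcs. -/
def IsCycle {n : ℕ} (G : PartGraph n) (l : List ℕ) : Prop :=
  2 ≤ l.length ∧ l.Nodup ∧ (∀ v ∈ l, v ∈ G.verts) ∧
    ∀ k < l.length, (cyc l k, cyc l (k + 1)) ∈ G.arcs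

/-- All vertices of `l` belong to country `i`. -/
def IsNationalTo {n : ℕ} (G : PartGraph n) (l : List ℕ) (i : Fin n) : Prop :=
  ∀ v ∈ l, G.country v = i

/-- A national cycle: all vertices in one country. -/
def IsNational {n : ℕ} (G : PartGraph n) (l : List ℕ) : Prop :=
  ∃ i, IsNationalTo G l i

/-- An international cycle: not national (equivalently, for cycles, it contains
an international arc). -/
def IsInternational {n : ℕ} (G : PartGraph n) (l : List ℕ) : Prop :=
  ¬ IsNational G l

/-- Position `k` (taken cyclically) is the start of a `V_i`-segment of `l`:
the vertex there is in country `i` but the cyclically preceding one is not. -/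
def segStart {n : ℕ} (G : PartGraph n) (l : List ℕ) (i : Fin n) (k : ℕ) : Prop :=
  G.country (cyc l k) = i ∧ G.country (cyc l (k + l.length - 1)) ≠ i

/-- The size of the run of consecutive (cyclic) positions of `l`, starting at
position `k`, whose vertices are in country `i`.  At a segment start this is
exactly the size of that `V_i`-segment. -/
noncomputable def runLen {n : ℕ} (G : PartGraph n) (l : List ℕ) (i : Fin n) (k : ℕ) : ℕ :=
  ((Finset.range l.length).filter
    fun j => ∀ j' ≤ j, G.country (cyc l (k + j')) = i).card

/-- The number of `V_i`-segments of the cycle `l`. -/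
noncomputable def numSegs {n : ℕ} (G : PartGraph n) (l : List ℕ) (i : Fin n) : ℕ :=
  ((Finset.range l.length).filter fun k => segStart G l i k).card

/-- A set `Γ` of country-specific parameters for `n` countries. -/
structure Params (n : ℕ) where
  icl : ℕ∞
  ncl : Fin n → ℕ∞
  iss : Fin n → ℕ∞
  isn : Fin n → ℕ∞
  icl_ne_one : icl ≠ 1
  ncl_ne_one : ∀ i, ncl i ≠ 1
  iss_pos : ∀ i, 1 ≤ iss i
  isn_pos : ∀ i, 1 ≤ isn i

/-- `l` is a `Γ`-cycle of `(G, 𝒱)`. -/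
def IsGammaCycle {n : ℕ} (G : PartGraph n) (Γ : Params n) (l : List ℕ) : Prop :=
  IsCycle G l ∧
    ((∃ i, IsNationalTo G l i ∧ (l.length : ℕ∞) ≤ Γ.ncl i) ∨
      (IsInternational G l ∧ (l.length : ℕ∞) ≤ Γ.icl ∧
        (∀ i, ∀ k < l.length, segStart G l i k → (runLen G l i k : ℕ∞) ≤ Γ.iss i) ∧
        (∀ i, (numSegs G l i : ℕ∞) ≤ Γ.isn i)))

/-- A cycle packing of `G`: a set of pairwise vertex-disjoint cycles. -/
def IsPacking {n : ℕ} (G : PartGraph n) (P : Finset (List ℕ)) : Prop :=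
  (∀ l ∈ P, IsCycle G l) ∧
    ∀ l ∈ P, ∀ l' ∈ P, l ≠ l' → ∀ v ∈ l, v ∉ l'

/-- The size of a cycle packing: total number of arcs (= vertices) of its cycles. -/
def packSize (P : Finset (List ℕ)) : ℕ := ∑ l ∈ P, l.length

/-- A `Γ`-cycle packing of `(G, 𝒱)`. -/
def IsGammaPackingG {n : ℕ} (G : PartGraph n) (Γ : Params n) (P : Finset (List ℕ)) : Prop :=
  IsPacking G P ∧ ∀ l ∈ P, IsGammaCycle G Γ l


/-- An IKEP instance `I = ⟨G, 𝒱, Γ⟩`. -/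
structure IKEP where
  n : ℕ
  npos : 1 ≤ n
  G : PartGraph n
  prm : Params n

/-- A `Γ`-cycle packing of the instance `I`. -/
def IsGammaPacking (I : IKEP) (P : Finset (List ℕ)) : Prop :=
  IsGammaPackingG I.G I.prm P

/-- The utility `u_i(C)` of country `i` from the cycle `C`: the number of arcs
of `C` entering country `i`, i.e. the number of vertices of `C` in country `i`. -/
noncomputable def cycUtil {n : ℕ} (G : PartGraph n) (i : Fin n) (l : List ℕ) : ℕ :=
  (l.filter fun v => G.country v = i).length

/-- The utility `u_i(𝒞)` of country `i` from a cycle packing. -/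
noncomputable def packUtil {n : ℕ} (G : PartGraph n) (i : Fin n) (P : Finset (List ℕ)) : ℕ :=
  ∑ l ∈ P, cycUtil G i l

/-- `opt(I)`: the maximum size of a `Γ`-cycle packing of `G`. -/
noncomputable def optSize (I : IKEP) : ℕ :=
  sSup {m | ∃ P, IsGammaPacking I P ∧ packSize P = m}

/-- `nat_i(I)`: the maximum size of a `Γ`-cycle packing of the subgraph
`G[V_i]` induced by country `i` (all its cycles are national, so the only
constraint from `Γ` is the national cycle limit `ncl i`). -/
noncomputable def natSize (I : IKEP) (i : Fin I.n) : ℕ :=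
  sSup {m | ∃ P, IsPacking I.G P ∧ (∀ l ∈ P, IsNationalTo I.G l i) ∧
    (∀ l ∈ P, (l.length : ℕ∞) ≤ I.prm.ncl i) ∧ packSize P = m}

/-- A (randomised) mechanism: for every IKEP instance it returns one `Γ`-cycle
packing according to a (finitely supported) probability distribution on the
set `𝒟_I` of all `Γ`-cycle packings of `G`. -/
structure Mechanism where
  dist : IKEP → (Finset (List ℕ) →₀ ℝ)
  nonneg : ∀ I P, 0 ≤ dist I P
  sum_one : ∀ I, ((dist I).sum fun _ p => p) = 1
  supp : ∀ I P, dist I P ≠ 0 → IsGammaPacking I P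

/-- The expected utility `U_i(ℳ(I))` of country `i`. -/
noncomputable def expUtil (M : Mechanism) (I : IKEP) (i : Fin I.n) : ℝ :=
  (M.dist I).sum fun P p => p * (packUtil I.G i P : ℝ)

/-- The expected social welfare `SW(ℳ(I)) = Σ_i U_i(ℳ(I))`: the expected size
of the returned packing. -/
noncomputable def sw (M : Mechanism) (I : IKEP) : ℝ :=
  (M.dist I).sum fun P p => p * (packSize P : ℝ)

/-- Individual rationality. -/
def IndRational (M : Mechanism) : Prop :=
  ∀ I : IKEP, ∀ i : Fin I.n, (natSize I i : ℝ) ≤ expUtil M I i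

/-- Efficiency. -/
def Efficient (M : Mechanism) : Prop :=
  ∀ I : IKEP, sw M I = (optSize I : ℝ)

/-- `Γ' ≤ᵢ Γ`: country `i` misreports by declaring (weakly) smaller
international segment size and segment number; all other parameters agree. -/
def ParamLE {n : ℕ} (i : Fin n) (Γ' Γ : Params n) : Prop :=
  Γ'.icl = Γ.icl ∧ Γ'.ncl = Γ.ncl ∧
    Γ'.iss i ≤ Γ.iss i ∧ Γ'.isn i ≤ Γ.isn i ∧
    (∀ h, h ≠ i → Γ'.iss h = Γ.iss h) ∧ (∀ h, h ≠ i → Γ'.isn h = Γ.isn h)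

/-- Incentive compatibility (with respect to segment size and segment number). -/
def IncentiveCompatible (M : Mechanism) : Prop :=
  ∀ I : IKEP, ∀ i : Fin I.n, ∀ Γ' : Params I.n, ParamLE i Γ' I.prm →
    expUtil M { I with prm := Γ' } i ≤ expUtil M I i

/-- An international `Γ`-cycle of the instance `I`. -/
def IsIntlGammaCycle (I : IKEP) (l : List ℕ) : Prop :=
  IsGammaCycle I.G I.prm l ∧ IsInternational I.G l

/-- `c_int(I)`: the maximum length of an international `Γ`-cycle of `G`. -/
noncomputable def cInt (I : IKEP) : ℕ :=
  sSup {s | ∃ l, IsIntlGammaCycle I l ∧ l.length = s}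


/-! ### The mechanism `ℳ_order` -/

/-- Nodup lists with entries in a fixed finite set form a finite set. -/
lemma finite_nodup_lists (s : Finset ℕ) :
    {l : List ℕ | l.Nodup ∧ ∀ x ∈ l, x ∈ s}.Finite := by
  classical
  have h : {l : List ℕ | l.Nodup ∧ ∀ x ∈ l, x ∈ s} ⊆
      Set.range fun l : {l : List {x : ℕ // x ∈ s} // l.Nodup} =>
        l.1.map Subtype.val := by
    rintro l ⟨hnd, hmem⟩
    refine ⟨⟨l.attach.map fun x => ⟨x.1, hmem x.1 x.2⟩, ?_⟩, ?_⟩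
    · refine (List.nodup_attach.mpr hnd).map ?_
      intro x y hxy
      have h2 := congrArg Subtype.val hxy
      exact Subtype.ext h2
    · simp [List.map_map, Function.comp]
  exact (Set.finite_range _).subset h

/-- The canonical list representation of a cycle: the one (among its
rotations) starting at its smallest vertex.  Working with canonical
representatives identifies lists up to rotation, i.e. identifies the abstract
cycles. -/
def IsCanon (l : List ℕ) : Prop := ∀ v ∈ l, l.headI ≤ v

/-- Membership in `𝒳(Ĝ)`: `l` is (the canonical representation of) an
international cycle of `G` of length at most `icl` all of whose vertices
belong to `avail` (the vertices of `Ĝ`). -/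
def XCond {n : ℕ} (G : PartGraph n) (icl : ℕ∞) (avail : Finset ℕ) (l : List ℕ) : Prop :=
  IsCycle G l ∧ (∀ v ∈ l, v ∈ avail) ∧ IsInternational G l ∧
    (l.length : ℕ∞) ≤ icl ∧ IsCanon l

lemma XCond_finite {n : ℕ} (G : PartGraph n) (icl : ℕ∞) (avail : Finset ℕ) :
    {l | XCond G icl avail l}.Finite :=
  (finite_nodup_lists avail).subset fun _ hl => ⟨hl.1.2.1, hl.2.1⟩

/-- The set `𝒳(Ĝ)`, listed in some fixed order. -/
noncomputable def XList {n : ℕ} (G : PartGraph n) (icl : ℕ∞) (avail : Finset ℕ) :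
    List (List ℕ) :=
  (XCond_finite G icl avail).toFinset.toList

/-- `l` is (the canonical representation of) a substitute for the cycle `C`:
an international `Γ`-cycle of `G` whose vertex set is contained in that of `C`
and which has at most one `V_i`-segment for every country `i`. -/
def SubCond {n : ℕ} (G : PartGraph n) (Γ : Params n) (C l : List ℕ) : Prop :=
  IsGammaCycle G Γ l ∧ IsInternational G l ∧ (∀ v ∈ l, v ∈ C) ∧
    (∀ i, numSegs G l i ≤ 1) ∧ IsCanon l

lemma SubCond_finite {n : ℕ} (G : PartGraph n) (Γ : Params n) (C : List ℕ) :
    {l | SubCond G Γ C l}.Finite :=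
  (finite_nodup_lists C.toFinset).subset fun _ hl =>
    ⟨hl.1.1.2.1, fun x hx => List.mem_toFinset.mpr (hl.2.2.1 x hx)⟩

/-- The substitutes for `C`, listed in some fixed order. -/
noncomputable def subList {n : ℕ} (G : PartGraph n) (Γ : Params n) (C : List ℕ) :
    List (List ℕ) :=
  (SubCond_finite G Γ C).toFinset.toList

/-- `c` is vertex-disjoint from all cycles in `acc`. -/
def DisjFrom (acc : List (List ℕ)) (c : List ℕ) : Prop :=
  ∀ a ∈ acc, ∀ v ∈ c, v ∉ a

/-- Step 4 of `ℳ_order`: scan the ordering and greedily collect pairwise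
vertex-disjoint cycles. -/
noncomputable def greedy : List (List ℕ) → List (List ℕ) → List (List ℕ)
  | acc, [] => acc
  | acc, c :: rest => if DisjFrom acc c then greedy (c :: acc) rest else greedy acc rest

/-- Step 5 of `ℳ_order`, in expectation: process the greedily selected cycles
one by one (keeping `Γ`-cycles, replacing turnable non-`Γ`-cycles by a
uniformly random substitute, deleting the rest), finally accumulating them
into `acc` (initialised with `𝒞_nat`), and return the expected value of `f`
of the resulting packing. -/
noncomputable def stepExp {n : ℕ} (G : PartGraph n) (Γ : Params n)
    (f : Finset (List ℕ) → ℝ) : List (List ℕ) → Finset (List ℕ) → ℝ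
  | [], acc => f acc
  | C :: rest, acc =>
    if IsGammaCycle G Γ C then stepExp G Γ f rest (insert C acc)
    else if subList G Γ C ≠ [] then
      (((subList G Γ C).map fun D => stepExp G Γ f rest (insert D acc)).sum) /
        ((subList G Γ C).length : ℝ)
    else stepExp G Γ f rest acc

/-- The expected value of `f` of the packing returned by `ℳ_order` on input
`I`, given that Step 1 pre-selected the national packing `Cnat`: the ordering
of `𝒳(Ĝ)` in Step 3 is uniformly random, and the substitutes in Step 5 are
chosen independently and uniformly at random. -/
noncomputable def MorderExpFrom (I : IKEP) (Cnat : Finset (List ℕ))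
    (f : Finset (List ℕ) → ℝ) : ℝ :=
  let avail := I.G.verts \ Cnat.biUnion List.toFinset
  let XL := XList I.G I.prm.icl avail
  ((XL.permutations.map fun ord => stepExp I.G I.prm f (greedy [] ord) Cnat).sum) /
    (XL.permutations.length : ℝ)

/-- A national `Γ`-cycle packing (only the national cycle limits `ncl` are
relevant). -/
def IsNatPacking {n : ℕ} (G : PartGraph n) (ncl : Fin n → ℕ∞)
    (P : Finset (List ℕ)) : Prop :=
  IsPacking G P ∧ ∀ l ∈ P, ∃ i, IsNationalTo G l i ∧ (l.length : ℕ∞) ≤ ncl i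

/-- A maximum national `Γ`-cycle packing. -/
def IsMaxNatPacking {n : ℕ} (G : PartGraph n) (ncl : Fin n → ℕ∞)
    (P : Finset (List ℕ)) : Prop :=
  IsNatPacking G ncl P ∧ ∀ Q, IsNatPacking G ncl Q → packSize Q ≤ packSize P

/-- A pre-selection function `σ`: it assigns to every partitioned graph and
every national cycle-limit vector a maximum national `Γ`-cycle packing
(depending only on these data). -/
structure PreSelection where
  sel : (n : ℕ) → PartGraph n → (Fin n → ℕ∞) → Finset (List ℕ)
  isMax : ∀ (n : ℕ) (G : PartGraph n) (ncl : Fin n → ℕ∞),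
    IsMaxNatPacking G ncl (sel n G ncl)

/-- The expected value of `f` of the packing returned by `ℳ_order` (with
pre-selection function `σ`) on input `I`. -/
noncomputable def MorderExp (σ : PreSelection) (I : IKEP)
    (f : Finset (List ℕ) → ℝ) : ℝ :=
  MorderExpFrom I (σ.sel I.n I.G I.prm.ncl) f

/-- The expected utility `U_i(ℳ_order(I))` of country `i`. -/
noncomputable def MorderU (σ : PreSelection) (I : IKEP) (i : Fin I.n) : ℝ :=
  MorderExp σ I fun P => (packUtil I.G i P : ℝ)

/-- The expected social welfare `SW(ℳ_order(I))`: the expected size of the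
returned packing. -/
noncomputable def MorderSW (σ : PreSelection) (I : IKEP) : ℝ :=
  MorderExp σ I fun P => (packSize P : ℝ)


/-- A family `p*` of probability distributions on the maximum national
`Γ`-cycle packings, depending only on the partitioned graph `(G, 𝒱)` and the
national cycle-limit vector `ncl`. -/
structure NatPackingDist where
  dist : (n : ℕ) → PartGraph n → (Fin n → ℕ∞) → (Finset (List ℕ) →₀ ℝ)
  nonneg : ∀ n G ncl P, 0 ≤ dist n G ncl P
  sum_one : ∀ n G ncl, ((dist n G ncl).sum fun _ p => p) = 1
  supp : ∀ n G ncl P, dist n G ncl P ≠ 0 → IsMaxNatPacking G ncl P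

/-- The expected value of `f` of the packing returned by the variant
`ℳ'_order` of `ℳ_order` whose Step 1 draws the national packing `𝒞_nat` at
random according to `p*`, independently of all other random choices. -/
noncomputable def Morder'Exp (p : NatPackingDist) (I : IKEP)
    (f : Finset (List ℕ) → ℝ) : ℝ :=
  (p.dist I.n I.G I.prm.ncl).sum fun Cnat q => q * MorderExpFrom I Cnat f

/-- The expected utility `U_i(ℳ'_order(I))` of country `i`. -/
noncomputable def Morder'U (p : NatPackingDist) (I : IKEP) (i : Fin I.n) : ℝ :=
  Morder'Exp p I fun P => (packUtil I.G i P : ℝ)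

/-! ### Auxiliary lemmas -/

section Aux

/-- Averages of lists: upper bound. -/
lemma list_avg_le {α : Type*} {L : List α} (hL : L ≠ []) {g : α → ℝ} {B : ℝ}
    (h : ∀ x ∈ L, g x ≤ B) : (L.map g).sum / (L.length : ℝ) ≤ B := by
  have hlen : (0:ℝ) < (L.length : ℝ) := by
    exact_mod_cast List.length_pos_iff.mpr hL
  rw [div_le_iff₀ hlen]
  calc (L.map g).sum ≤ (L.map fun _ => B).sum := by
        apply List.sum_le_sum
        intro x hx
        exact h x hx
    _ = B * L.length := by
        simp [List.map_const', List.sum_replicate, nsmul_eq_mul, mul_comm]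

/-- Averages of lists: lower bound. -/
lemma list_le_avg {α : Type*} {L : List α} (hL : L ≠ []) {g : α → ℝ} {B : ℝ}
    (h : ∀ x ∈ L, B ≤ g x) : B ≤ (L.map g).sum / (L.length : ℝ) := by
  have hlen : (0:ℝ) < (L.length : ℝ) := by
    exact_mod_cast List.length_pos_iff.mpr hL
  rw [le_div_iff₀ hlen]
  calc B * L.length = (L.map fun _ => B).sum := by
        simp [List.map_const', List.sum_replicate, nsmul_eq_mul, mul_comm]
    _ ≤ (L.map g).sum := by
        apply List.sum_le_sum
        intro x hx
        exact h x hx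

lemma list_avg_nonneg {α : Type*} {L : List α} {g : α → ℝ}
    (h : ∀ x ∈ L, 0 ≤ g x) : 0 ≤ (L.map g).sum / (L.length : ℝ) := by
  apply div_nonneg _ (by positivity)
  apply List.sum_nonneg
  intro x hx
  obtain ⟨a, ha, rfl⟩ := List.mem_map.mp hx
  exact h a ha

lemma list_sum_map_add_const {α : Type*} (L : List α) (A : ℝ) (u : α → ℝ) :
    (L.map fun x => A + u x).sum = (L.length : ℝ) * A + (L.map u).sum := by
  induction L with
  | nil => simp
  | cons a t ih => simp [ih]; ring

/-- Average over a subset is at most average over the whole set, when every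
removed element dominates every kept element. -/
lemma finset_avg_subset_le {α : Type*} {F' F : Finset α} (hsub : F' ⊆ F)
    (hne : F'.Nonempty) {u : α → ℝ} (hu : ∀ a ∈ F, 0 ≤ u a)
    (hcmp : ∀ a ∈ F', ∀ b ∈ F \ F', u a ≤ u b) :
    (∑ a ∈ F', u a) / (F'.card : ℝ) ≤ (∑ a ∈ F, u a) / (F.card : ℝ) := by
  have hF'pos : (0:ℝ) < F'.card := by exact_mod_cast Finset.card_pos.mpr hne
  have hFpos : (0:ℝ) < F.card := by
    exact_mod_cast Finset.card_pos.mpr (hne.mono hsub)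
  rw [div_le_div_iff₀ hF'pos hFpos]
  have hsplit : ∑ a ∈ F, u a = ∑ a ∈ F', u a + ∑ a ∈ F \ F', u a := by
    rw [← Finset.sum_union (Finset.disjoint_sdiff)]
    congr 1
    exact (Finset.union_sdiff_of_subset hsub).symm
  have hcard : (F.card : ℝ) = F'.card + (F \ F').card := by
    rw [Finset.card_sdiff_of_subset hsub]
    have := Finset.card_le_card hsub
    push_cast [this]
    ring
  -- key: (F\F').card * ∑_{F'} u ≤ F'.card * ∑_{F\F'} u
  have key : ((F \ F').card : ℝ) * ∑ a ∈ F', u a ≤ (F'.card : ℝ) * ∑ b ∈ F \ F', u b := by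
    have : ∑ _b ∈ F \ F', ∑ a ∈ F', u a ≤ ∑ b ∈ F \ F', ∑ _a ∈ F', u b := by
      apply Finset.sum_le_sum
      intro b hb
      apply Finset.sum_le_sum
      intro a ha
      exact hcmp a ha b hb
    simpa [Finset.sum_const, nsmul_eq_mul, Finset.mul_sum, Finset.sum_comm (s := F \ F')] using this
  rw [hsplit, hcard]
  ring_nf
  nlinarith [key]

end Aux
section Cyclic

variable {n : ℕ} {G : PartGraph n} {l : List ℕ} {i : Fin n}

lemma cyc_congr {a b : ℕ} (h : a % l.length = b % l.length) : cyc l a = cyc l b := by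
  unfold cyc; rw [h]

lemma cyc_add_length (a : ℕ) : cyc l (a + l.length) = cyc l a :=
  cyc_congr (Nat.add_mod_right a l.length)

lemma cyc_mod (a : ℕ) : cyc l (a % l.length) = cyc l a :=
  cyc_congr (Nat.mod_mod_of_dvd a dvd_rfl)

lemma pred_mod {L : ℕ} (hL : 0 < L) (a : ℕ) : (a % L + L - 1) % L = (a + L - 1) % L := by
  have h1 : a % L + L - 1 = a % L + (L-1) := by omega
  have h2 : a + L - 1 = a + (L-1) := by omega
  rw [h1, h2]
  exact Nat.ModEq.add_right (L-1) (Nat.mod_modEq a L)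

lemma segStart_mod (hl : l ≠ []) (a : ℕ) :
    segStart G l i (a % l.length) ↔ segStart G l i a := by
  have hL : 0 < l.length := List.length_pos_iff.mpr hl
  unfold segStart
  rw [cyc_mod, cyc_congr (pred_mod hL a)]

/-- `cycUtil` counted via positions. -/
lemma cycUtil_eq_card (G : PartGraph n) (i : Fin n) (l : List ℕ) :
    cycUtil G i l =
      ((Finset.range l.length).filter fun m => G.country (cyc l m) = i).card := by
  induction l with
  | nil => simp [cycUtil]
  | cons a t ih =>
    have hc : ∀ m < t.length + 1, cyc (a :: t) m = (a :: t).getD m 0 := by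
      intro m hm
      unfold cyc
      rw [Nat.mod_eq_of_lt (by simpa using hm)]
    simp only [Finset.card_filter]
    rw [List.length_cons, Finset.sum_range_succ']
    have h0 : cyc (a :: t) 0 = a := hc 0 (by omega)
    have hsucc : ∀ m < t.length, cyc (a :: t) (m + 1) = cyc t m := by
      intro m hm
      rw [hc (m+1) (by omega)]
      unfold cyc
      rw [Nat.mod_eq_of_lt hm]
      simp
    have : ∀ m ∈ Finset.range t.length,
        (if G.country (cyc (a :: t) (m + 1)) = i then 1 else 0) =
          (if G.country (cyc t m) = i then 1 else 0) := by
      intro m hm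
      rw [hsucc m (Finset.mem_range.mp hm)]
    rw [Finset.sum_congr rfl this, h0]
    simp only [cycUtil, List.filter_cons]
    have ih' : (List.filter (fun v => decide (G.country v = i)) t).length =
        ∑ m ∈ Finset.range t.length, if G.country (cyc t m) = i then 1 else 0 := by
      have := ih
      rw [Finset.card_filter] at this
      simpa [cycUtil] using this
    by_cases hai : G.country a = i
    · simp [hai, cycUtil, ih']
    · simp [hai, cycUtil, ih']

lemma runLen_le_cycUtil (hl : l ≠ []) (k : ℕ) : runLen G l i k ≤ cycUtil G i l := by
  rw [cycUtil_eq_card]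
  unfold runLen
  have hL : 0 < l.length := List.length_pos_iff.mpr hl
  apply Finset.card_le_card_of_injOn (fun j => (k + j) % l.length)
  · intro j hj
    simp only [Finset.mem_coe, Finset.mem_filter, Finset.mem_range] at hj ⊢
    refine ⟨Nat.mod_lt _ hL, ?_⟩
    rw [cyc_mod]
    exact hj.2 j le_rfl
  · intro a ha b hb hab
    simp only [Finset.coe_filter, Set.mem_setOf_eq, Finset.mem_range] at ha hb
    have h1 : (k + a) % l.length = (k + b) % l.length := hab
    have := Nat.ModEq.add_left_cancel' k h1
    rwa [Nat.ModEq, Nat.mod_eq_of_lt ha.1, Nat.mod_eq_of_lt hb.1] at this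

/-- If there is no segment start and some vertex outside country `i`, then no
position is in country `i`. -/
lemma no_pos_of_no_segStart (hl : l ≠ [])
    (hno : ∀ k < l.length, ¬ segStart G l i k)
    (hout : ∃ v ∈ l, G.country v ≠ i) :
    ∀ m, G.country (cyc l m) ≠ i := by
  set L := l.length with hLdef
  have hL : 0 < L := List.length_pos_iff.mpr hl
  -- non-i propagates to the successor
  have step : ∀ x, G.country (cyc l x) ≠ i → G.country (cyc l (x+1)) ≠ i := by
    intro x hx hsucc
    have hlt : (x+1) % L < L := Nat.mod_lt _ hL
    apply hno ((x+1) % L) hlt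
    rw [segStart_mod hl]
    constructor
    · exact hsucc
    · have heq : cyc l (x + 1 + L - 1) = cyc l x := by
        apply cyc_congr
        have : x + 1 + L - 1 = x + L := by omega
        rw [this, Nat.add_mod_right]
      rw [heq]
      exact hx
  -- get a starting non-i position
  obtain ⟨v, hv, hvi⟩ := hout
  obtain ⟨j₀, hj₀lt, hj₀⟩ := List.mem_iff_getElem.mp hv
  have hstart : G.country (cyc l j₀) ≠ i := by
    have : cyc l j₀ = v := by
      unfold cyc
      rw [Nat.mod_eq_of_lt hj₀lt, List.getD_eq_getElem l 0 hj₀lt, hj₀]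
    rw [this]; exact hvi
  have all : ∀ d, G.country (cyc l (j₀ + d)) ≠ i := by
    intro d
    induction d with
    | zero => exact hstart
    | succ e ih => exact step _ ih
  intro m
  have h1 : cyc l m = cyc l (j₀ + (m + L - j₀)) := by
    have : j₀ + (m + L - j₀) = m + L := by omega
    rw [this, cyc_add_length]
  rw [h1]
  exact all _

/-- If `k₀` is the unique segment start, then all country-`i` positions lie in
its run. -/
lemma cycUtil_le_runLen (hl : l ≠ []) {k₀ : ℕ} (hk₀ : k₀ < l.length)
    (hseg : segStart G l i k₀)
    (huniq : ∀ k < l.length, segStart G l i k → k = k₀) :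
    cycUtil G i l ≤ runLen G l i k₀ := by
  set L := l.length with hLdef
  have hL : 0 < L := List.length_pos_iff.mpr hl
  rw [cycUtil_eq_card]
  unfold runLen
  apply Finset.card_le_card_of_injOn (fun m => (m + L - k₀) % L)
  · intro m hm
    simp only [Finset.mem_coe, Finset.mem_filter, Finset.mem_range] at hm ⊢
    obtain ⟨hmlt, hmi⟩ := hm
    set t := (m + L - k₀) % L with htdef
    refine ⟨Nat.mod_lt _ hL, ?_⟩
    have htlt : t < L := Nat.mod_lt _ hL
    have hend : G.country (cyc l (k₀ + t)) = i := by
      have : cyc l (k₀ + t) = cyc l m := by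
        apply cyc_congr
        have h1 : (k₀ + t) % L = (k₀ + (m + L - k₀)) % L := by
          rw [htdef]
          exact Nat.ModEq.add_left k₀ (Nat.mod_modEq _ _)
        have h2 : k₀ + (m + L - k₀) = m + L := by omega
        rw [h1, h2, Nat.add_mod_right]
      rw [this]; exact hmi
    intro j' hj'
    by_contra hbad
    -- take the largest bad index ≤ t
    have hSne : ((Finset.range (t+1)).filter
        (fun j => G.country (cyc l (k₀ + j)) ≠ i)).Nonempty := ⟨j', by
      simp only [Finset.mem_filter, Finset.mem_range]
      exact ⟨by omega, hbad⟩⟩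
    obtain ⟨j'', hj''mem, hj''max⟩ : ∃ j'' ∈ (Finset.range (t+1)).filter
        (fun j => G.country (cyc l (k₀ + j)) ≠ i), ∀ x ∈ (Finset.range (t+1)).filter
        (fun j => G.country (cyc l (k₀ + j)) ≠ i), x ≤ j'' :=
      ⟨_, Finset.max'_mem _ hSne, fun x hx => Finset.le_max' _ x hx⟩
    simp only [Finset.mem_filter, Finset.mem_range] at hj''mem
    obtain ⟨hj''le, hj''ne⟩ := hj''mem
    have hj''le' : j'' ≤ t := by omega
    have hj''netop : j'' ≠ t := by
      intro h
      rw [h] at hj''ne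
      exact hj''ne hend
    have hj''lt : j'' < t := lt_of_le_of_ne hj''le' hj''netop
    have hsucci : G.country (cyc l (k₀ + j'' + 1)) = i := by
      by_contra hc
      have hmem : j'' + 1 ∈ (Finset.range (t+1)).filter
          (fun j => G.country (cyc l (k₀ + j)) ≠ i) := by
        simp only [Finset.mem_filter, Finset.mem_range]
        constructor
        · omega
        · have : k₀ + (j'' + 1) = k₀ + j'' + 1 := by omega
          rw [this]; exact hc
      have := hj''max _ hmem
      omega
    -- `k₀ + j'' + 1` is a segment start
    have hss : segStart G l i ((k₀ + j'' + 1) % L) := by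
      rw [segStart_mod hl]
      constructor
      · exact hsucci
      · have : cyc l (k₀ + j'' + 1 + L - 1) = cyc l (k₀ + j'') := by
          apply cyc_congr
          have : k₀ + j'' + 1 + L - 1 = (k₀ + j'') + L := by omega
          rw [this, Nat.add_mod_right]
        rw [this]
        exact hj''ne
    have heqk : (k₀ + j'' + 1) % L = k₀ := huniq _ (Nat.mod_lt _ hL) hss
    have hmod : (k₀ + (j'' + 1)) % L = (k₀ + 0) % L := by
      have h1 : k₀ + (j''+1) = k₀ + j'' + 1 := by omega
      rw [h1, heqk, Nat.add_zero, Nat.mod_eq_of_lt hk₀]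
    have := Nat.ModEq.add_left_cancel' k₀ hmod
    have hdvd : L ∣ (j'' + 1) := (Nat.modEq_zero_iff_dvd).mp this
    have := Nat.le_of_dvd (by omega) hdvd
    omega
  · intro a ha b hb hab
    simp only [Finset.coe_filter, Set.mem_setOf_eq, Finset.mem_range] at ha hb
    have ha1 : a + L - k₀ = a + (L - k₀) := by omega
    have hb1 : b + L - k₀ = b + (L - k₀) := by omega
    simp only at hab
    rw [ha1, hb1] at hab
    have := Nat.ModEq.add_right_cancel' (L - k₀) hab
    rwa [Nat.ModEq, Nat.mod_eq_of_lt ha.1, Nat.mod_eq_of_lt hb.1] at this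

/-- Combined: an international cycle with at most one `V_i`-segment whose
segments all have size at most `m` has at most `m` vertices in country `i`. -/
lemma cycUtil_le_of_one_seg {m : ℕ∞} (hcyc : IsCycle G l) (hint : IsInternational G l)
    (hsegs : numSegs G l i ≤ 1)
    (hrun : ∀ k < l.length, segStart G l i k → (runLen G l i k : ℕ∞) ≤ m) :
    (cycUtil G i l : ℕ∞) ≤ m := by
  have hl : l ≠ [] := by
    intro h
    have := hcyc.1
    rw [h] at this
    simp at this
  have hout : ∃ v ∈ l, G.country v ≠ i := by
    have : ¬ IsNationalTo G l i := fun h => hint ⟨i, h⟩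
    unfold IsNationalTo at this
    push_neg at this
    exact this
  by_cases hex : ∃ k < l.length, segStart G l i k
  · obtain ⟨k₀, hk₀, hs⟩ := hex
    have huniq : ∀ k < l.length, segStart G l i k → k = k₀ := by
      intro k hk hsk
      have hcard := hsegs
      unfold numSegs at hcard
      have hk₀mem : k₀ ∈ (Finset.range l.length).filter (fun k => segStart G l i k) := by
        simp only [Finset.mem_filter, Finset.mem_range]; exact ⟨hk₀, hs⟩
      have hkmem : k ∈ (Finset.range l.length).filter (fun k => segStart G l i k) := by
        simp only [Finset.mem_filter, Finset.mem_range]; exact ⟨hk, hsk⟩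
      exact Finset.card_le_one.mp hcard _ hkmem _ hk₀mem
    calc (cycUtil G i l : ℕ∞) ≤ (runLen G l i k₀ : ℕ∞) := by
          exact_mod_cast cycUtil_le_runLen hl hk₀ hs huniq
      _ ≤ m := hrun k₀ hk₀ hs
  · push_neg at hex
    have : cycUtil G i l = 0 := by
      rw [cycUtil_eq_card]
      rw [Finset.card_eq_zero]
      apply Finset.filter_eq_empty_iff.mpr
      intro k hk
      exact no_pos_of_no_segStart hl hex hout k
    rw [this]
    simp

end Cyclic
section Mono

variable {n : ℕ} {G : PartGraph n} {i : Fin n} {Γ' Γ : Params n} {l C D : List ℕ}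

lemma cycUtil_le_of_subset (hnd : D.Nodup) (hsub : ∀ v ∈ D, v ∈ C) :
    cycUtil G i D ≤ cycUtil G i C := by
  unfold cycUtil
  have h1 : (D.filter fun v => G.country v = i).toFinset ⊆
      (C.filter fun v => G.country v = i).toFinset := by
    intro x hx
    simp only [List.mem_toFinset, List.mem_filter] at hx ⊢
    exact ⟨hsub x hx.1, hx.2⟩
  have h2 := Finset.card_le_card h1
  rw [List.toFinset_card_of_nodup (hnd.filter _)] at h2
  exact h2.trans (List.toFinset_card_le _)

lemma gammaCycle_mono (hle : ParamLE i Γ' Γ) (h : IsGammaCycle G Γ' l) :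
    IsGammaCycle G Γ l := by
  obtain ⟨hicl, hncl, hiss, hisn, hissh, hisnh⟩ := hle
  obtain ⟨hcyc, hd⟩ := h
  refine ⟨hcyc, ?_⟩
  rcases hd with ⟨j, hj, hlen⟩ | ⟨hint, hlen, hrun, hsegs⟩
  · exact Or.inl ⟨j, hj, by rw [← hncl]; exact hlen⟩
  · refine Or.inr ⟨hint, by rw [← hicl]; exact hlen, ?_, ?_⟩
    · intro h k hk hsk
      by_cases hhi : h = i
      · subst hhi
        exact (hrun h k hk hsk).trans hiss
      · rw [← hissh h hhi]
        exact hrun h k hk hsk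
    · intro h
      by_cases hhi : h = i
      · subst hhi
        exact (hsegs h).trans hisn
      · rw [← hisnh h hhi]
        exact hsegs h

lemma subCond_mono (hle : ParamLE i Γ' Γ) (h : SubCond G Γ' C D) : SubCond G Γ C D :=
  ⟨gammaCycle_mono hle h.1, h.2.1, h.2.2.1, h.2.2.2.1, h.2.2.2.2⟩

lemma mem_subList : D ∈ subList G Γ C ↔ SubCond G Γ C D := by
  unfold subList
  rw [Finset.mem_toList, Set.Finite.mem_toFinset]
  rfl

/-- A kept substitute for a misreporting country `i` has utility at most the
reported `iss i`. -/
lemma kept_bound (ha : SubCond G Γ' C D) : (cycUtil G i D : ℕ∞) ≤ Γ'.iss i := by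
  obtain ⟨hg, hint, _, hsegs, _⟩ := ha
  apply cycUtil_le_of_one_seg hg.1 hint (hsegs i)
  intro k hk hsk
  rcases hg.2 with ⟨j, hj, _⟩ | hintb
  · exact absurd ⟨j, hj⟩ hint
  · exact hintb.2.2.1 i k hk hsk

/-- A substitute discarded by the misreport has a too-long `V_i`-segment. -/
lemma removed_big_run (hle : ParamLE i Γ' Γ) (hb : SubCond G Γ C D)
    (hnb : ¬ SubCond G Γ' C D) :
    ∃ k < D.length, segStart G D i k ∧ Γ'.iss i < (runLen G D i k : ℕ∞) := by
  obtain ⟨hg, hint, hsubC, hsegs, hcanon⟩ := hb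
  obtain ⟨hcyc, hd⟩ := hg
  have hintl : (D.length : ℕ∞) ≤ Γ.icl ∧
      (∀ h, ∀ k < D.length, segStart G D h k → (runLen G D h k : ℕ∞) ≤ Γ.iss h) ∧
      (∀ h, (numSegs G D h : ℕ∞) ≤ Γ.isn h) := by
    rcases hd with ⟨j, hj, _⟩ | hintb
    · exact absurd ⟨j, hj⟩ hint
    · exact ⟨hintb.2.1, hintb.2.2.1, hintb.2.2.2⟩
  by_contra hcon
  push_neg at hcon
  apply hnb
  refine ⟨⟨hcyc, Or.inr ⟨hint, ?_, ?_, ?_⟩⟩, hint, hsubC, hsegs, hcanon⟩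
  · rw [hle.1]; exact hintl.1
  · intro h k hk hsk
    by_cases hhi : h = i
    · subst hhi
      exact hcon k hk hsk
    · rw [hle.2.2.2.2.1 h hhi]
      exact hintl.2.1 h k hk hsk
  · intro h
    by_cases hhi : h = i
    · subst hhi
      calc (numSegs G D h : ℕ∞) ≤ 1 := by exact_mod_cast hsegs h
        _ ≤ Γ'.isn h := Γ'.isn_pos h
    · rw [hle.2.2.2.2.2 h hhi]
      exact hintl.2.2 h

end Mono

/-! ### The expected contribution of each greedily selected cycle -/

noncomputable def contrib {n : ℕ} (G : PartGraph n) (Γ : Params n) (i : Fin n)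
    (C : List ℕ) : ℝ :=
  if IsGammaCycle G Γ C then (cycUtil G i C : ℝ)
  else if subList G Γ C ≠ [] then
    ((subList G Γ C).map fun D => (cycUtil G i D : ℝ)).sum / ((subList G Γ C).length : ℝ)
  else 0

noncomputable def EE {n : ℕ} (G : PartGraph n) (Γ : Params n) (i : Fin n)
    (rest : List (List ℕ)) : ℝ :=
  (rest.map (contrib G Γ i)).sum

section Contrib

variable {n : ℕ} {G : PartGraph n} {i : Fin n} {Γ' Γ : Params n} {C : List ℕ}

lemma contrib_nonneg : 0 ≤ contrib G Γ i C := by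
  unfold contrib
  split_ifs
  · positivity
  · exact list_avg_nonneg (by intro x hx; positivity)
  · exact le_refl 0

lemma EE_nonneg (rest : List (List ℕ)) : 0 ≤ EE G Γ i rest := by
  apply List.sum_nonneg
  intro x hx
  obtain ⟨a, _, rfl⟩ := List.mem_map.mp hx
  exact contrib_nonneg

lemma contrib_mono (hle : ParamLE i Γ' Γ) : contrib G Γ' i C ≤ contrib G Γ i C := by
  by_cases h1 : IsGammaCycle G Γ' C
  · have h2 := gammaCycle_mono hle h1
    unfold contrib
    rw [if_pos h1, if_pos h2]
  · unfold contrib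
    rw [if_neg h1]
    by_cases h2 : IsGammaCycle G Γ C
    · rw [if_pos h2]
      by_cases h3 : subList G Γ' C ≠ []
      · rw [if_pos h3]
        apply list_avg_le h3
        intro D hD
        have hs := mem_subList.mp hD
        have hnd : D.Nodup := hs.1.1.2.1
        exact_mod_cast cycUtil_le_of_subset hnd hs.2.2.1
      · rw [if_neg h3]
        positivity
    · rw [if_neg h2]
      by_cases h3 : subList G Γ' C ≠ []
      · rw [if_pos h3]
        have hsub : (SubCond_finite G Γ' C).toFinset ⊆ (SubCond_finite G Γ C).toFinset := by
          intro D hD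
          rw [Set.Finite.mem_toFinset] at hD ⊢
          exact subCond_mono hle hD
        have h4 : subList G Γ C ≠ [] := by
          obtain ⟨D, hD⟩ := List.exists_mem_of_ne_nil _ h3
          exact List.ne_nil_of_mem (mem_subList.mpr (subCond_mono hle (mem_subList.mp hD)))
        rw [if_pos h4]
        -- convert to finset averages
        have hconv : ∀ (Δ : Params n),
            ((subList G Δ C).map fun D => (cycUtil G i D : ℝ)).sum =
              ∑ D ∈ (SubCond_finite G Δ C).toFinset, (cycUtil G i D : ℝ) := by
          intro Δ
          unfold subList
          rw [Finset.sum_map_toList]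
        have hlen : ∀ (Δ : Params n),
            ((subList G Δ C).length : ℝ) = ((SubCond_finite G Δ C).toFinset.card : ℝ) := by
          intro Δ
          unfold subList
          rw [Finset.length_toList]
        rw [hconv, hconv, hlen, hlen]
        apply finset_avg_subset_le hsub
        · obtain ⟨D, hD⟩ := List.exists_mem_of_ne_nil _ h3
          exact ⟨D, Set.Finite.mem_toFinset _ |>.mpr (mem_subList.mp hD)⟩
        · intro D hD
          positivity
        · intro a ha b hb
          rw [Set.Finite.mem_toFinset] at ha
          simp only [Finset.mem_sdiff, Set.Finite.mem_toFinset] at hb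
          have hkept : (cycUtil G i a : ℕ∞) ≤ Γ'.iss i := kept_bound ha
          obtain ⟨k, hk, hsk, hbig⟩ := removed_big_run hle hb.1 hb.2
          have hbD : b ≠ [] := by
            intro h
            have := hb.1.1.1.1
            rw [h] at this
            simp at this
          have hrb : (runLen G b i k : ℕ∞) ≤ (cycUtil G i b : ℕ∞) := by
            exact_mod_cast runLen_le_cycUtil hbD k
          have : (cycUtil G i a : ℕ∞) ≤ (cycUtil G i b : ℕ∞) :=
            hkept.trans (le_of_lt (lt_of_lt_of_le hbig hrb))
          exact_mod_cast this
      · rw [if_neg h3]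
        split_ifs with h4
        · exact list_avg_nonneg (by intro x hx; positivity)
        · exact le_refl 0

end Contrib
section Decomp

variable {n : ℕ} {G : PartGraph n} {i : Fin n} {Γ' Γ : Params n}

/-- Decomposition of `stepExp` for the utility function: the accumulated
utility plus the expected contributions of the remaining cycles. -/
lemma stepExp_eq (G : PartGraph n) (Γ : Params n) (i : Fin n) :
    ∀ (rest : List (List ℕ)) (acc : Finset (List ℕ)),
      List.Pairwise (fun a b => ∀ v ∈ a, v ∉ b) rest →
      (∀ C ∈ rest, ∀ a ∈ acc, ∀ v ∈ C, v ∉ a) →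
      (∀ C ∈ rest, C ≠ []) →
      stepExp G Γ (fun P => (packUtil G i P : ℝ)) rest acc =
        (packUtil G i acc : ℝ) + EE G Γ i rest := by
  intro rest
  induction rest with
  | nil =>
    intro acc _ _ _
    simp [stepExp, EE]
  | cons C rest ih =>
    intro acc hpw hdisj hne
    have hCne : C ≠ [] := hne C (by simp)
    obtain ⟨v₀, hv₀⟩ := List.exists_mem_of_ne_nil C hCne
    obtain ⟨hChead, hpwrest⟩ := List.pairwise_cons.mp hpw
    have hinsert : ∀ D : List ℕ, D ≠ [] → (∀ v ∈ D, v ∈ C) →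
        D ∉ acc ∧ (∀ C' ∈ rest, ∀ a ∈ insert D acc, ∀ v ∈ C', v ∉ a) := by
      intro D hDne hDsub
      constructor
      · intro hDacc
        obtain ⟨w, hw⟩ := List.exists_mem_of_ne_nil D hDne
        exact hdisj C (by simp) D hDacc w (hDsub w hw) hw
      · intro C' hC' a ha v hv
        rcases Finset.mem_insert.mp ha with rfl | ha'
        · intro hvD
          exact hChead C' hC' v (hDsub v hvD) hv
        · exact hdisj C' (by simp [hC']) a ha' v hv
    have hdisjrest : ∀ C' ∈ rest, ∀ a ∈ acc, ∀ v ∈ C', v ∉ a :=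
      fun C' hC' => hdisj C' (by simp [hC'])
    have hnerest : ∀ C' ∈ rest, C' ≠ [] := fun C' hC' => hne C' (by simp [hC'])
    simp only [stepExp]
    by_cases h1 : IsGammaCycle G Γ C
    · rw [if_pos h1]
      have hins := hinsert C hCne (fun v hv => hv)
      rw [ih (insert C acc) hpwrest hins.2 hnerest]
      rw [show packUtil G i (insert C acc) = cycUtil G i C + packUtil G i acc from
        Finset.sum_insert hins.1]
      simp only [EE, List.map_cons, List.sum_cons, contrib, if_pos h1]
      push_cast
      ring
    · rw [if_neg h1]
      by_cases h2 : subList G Γ C ≠ []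
      · rw [if_pos h2]
        have hterm : ∀ D ∈ subList G Γ C,
            stepExp G Γ (fun P => (packUtil G i P : ℝ)) rest (insert D acc) =
              ((packUtil G i acc : ℝ) + EE G Γ i rest) + (cycUtil G i D : ℝ) := by
          intro D hD
          have hs := mem_subList.mp hD
          have hDne : D ≠ [] := by
            intro h
            have := hs.1.1.1
            rw [h] at this
            simp at this
          obtain ⟨hDnot, hinv⟩ := hinsert D hDne hs.2.2.1
          rw [ih (insert D acc) hpwrest hinv hnerest]
          rw [show packUtil G i (insert D acc) = cycUtil G i D + packUtil G i acc from
            Finset.sum_insert hDnot]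
          push_cast
          ring
        rw [List.map_congr_left hterm, list_sum_map_add_const]
        have hlen : (0:ℝ) < ((subList G Γ C).length : ℝ) := by
          exact_mod_cast List.length_pos_iff.mpr h2
        simp only [EE, List.map_cons, List.sum_cons, contrib, if_neg h1, if_pos h2]
        field_simp
        ring
      · rw [if_neg h2]
        rw [ih acc hpwrest hdisjrest hnerest]
        simp only [EE, List.map_cons, List.sum_cons, contrib, if_neg h1, if_neg h2]
        ring

lemma greedy_invariant {Q : List ℕ → Prop} :
    ∀ (ord acc : List (List ℕ)),
      List.Pairwise (fun a b => ∀ v ∈ a, v ∉ b) acc →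
      (∀ a ∈ acc, Q a) → (∀ c ∈ ord, Q c) →
      List.Pairwise (fun a b => ∀ v ∈ a, v ∉ b) (greedy acc ord) ∧
        ∀ a ∈ greedy acc ord, Q a := by
  intro ord
  induction ord with
  | nil =>
    intro acc h1 h2 _
    exact ⟨h1, h2⟩
  | cons c rest ih =>
    intro acc h1 h2 h3
    simp only [greedy]
    split_ifs with hd
    · apply ih (c :: acc)
      · exact List.pairwise_cons.mpr ⟨fun a ha v hv => hd a ha v hv, h1⟩
      · intro a ha
        rcases List.mem_cons.mp ha with rfl | ha'
        · exact h3 a (by simp)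
        · exact h2 a ha'
      · intro c' hc'
        exact h3 c' (by simp [hc'])
    · exact ih acc h1 h2 (fun c' hc' => h3 c' (by simp [hc']))

lemma mem_XList {icl : ℕ∞} {avail : Finset ℕ} {c : List ℕ} :
    c ∈ XList G icl avail ↔ XCond G icl avail c := by
  unfold XList
  rw [Finset.mem_toList, Set.Finite.mem_toFinset]
  rfl

lemma greedy_inv_full (G : PartGraph n) (icl : ℕ∞) (Cnat : Finset (List ℕ))
    (ord : List (List ℕ))
    (hord : ∀ c ∈ ord, XCond G icl (G.verts \ Cnat.biUnion List.toFinset) c) :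
    List.Pairwise (fun a b => ∀ v ∈ a, v ∉ b) (greedy [] ord) ∧
      (∀ C ∈ greedy [] ord, ∀ a ∈ Cnat, ∀ v ∈ C, v ∉ a) ∧
      (∀ C ∈ greedy [] ord, C ≠ []) := by
  have h := greedy_invariant (Q := XCond G icl (G.verts \ Cnat.biUnion List.toFinset))
    ord [] (by simp) (by simp) hord
  refine ⟨h.1, ?_, ?_⟩
  · intro C hC a ha v hv hva
    have hx := h.2 C hC
    have hvav := hx.2.1 v hv
    rw [Finset.mem_sdiff] at hvav
    exact hvav.2 (Finset.mem_biUnion.mpr ⟨a, ha, List.mem_toFinset.mpr hva⟩)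
  · intro C hC hemp
    have hx := h.2 C hC
    have := hx.1.1
    rw [hemp] at this
    simp at this

lemma perms_ne_nil {α : Type*} (L : List α) : L.permutations ≠ [] := by
  intro h
  have := List.length_permutations L
  rw [h] at this
  simp at this
  exact (Nat.factorial_ne_zero _ ) this.symm

/-- IR core: the expected utility is at least the utility from `Cnat`. -/
lemma core_ir (I : IKEP) (i : Fin I.n) (Cnat : Finset (List ℕ)) :
    (packUtil I.G i Cnat : ℝ) ≤
      MorderExpFrom I Cnat (fun P => (packUtil I.G i P : ℝ)) := by
  unfold MorderExpFrom
  apply list_le_avg (perms_ne_nil _)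
  intro ord hord
  have hord' : ∀ c ∈ ord, XCond I.G I.prm.icl (I.G.verts \ Cnat.biUnion List.toFinset) c := by
    intro c hc
    exact mem_XList.mp ((List.mem_permutations.mp hord).mem_iff.mp hc)
  obtain ⟨h1, h2, h3⟩ := greedy_inv_full I.G I.prm.icl Cnat ord hord'
  rw [stepExp_eq I.G I.prm i _ Cnat h1 h2 h3]
  have := EE_nonneg (G := I.G) (Γ := I.prm) (i := i) (greedy [] ord)
  linarith

/-- IC core: the expected utility with a misreported `Γ'` is at most the one
with the true parameters. -/
lemma core_ic (I : IKEP) (i : Fin I.n) (Γ' : Params I.n) (hle : ParamLE i Γ' I.prm)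
    (Cnat : Finset (List ℕ)) :
    MorderExpFrom { I with prm := Γ' } Cnat (fun P => (packUtil I.G i P : ℝ)) ≤
      MorderExpFrom I Cnat (fun P => (packUtil I.G i P : ℝ)) := by
  unfold MorderExpFrom
  dsimp only
  rw [hle.1]
  have hlen : (0:ℝ) < (((XList I.G I.prm.icl
      (I.G.verts \ Cnat.biUnion List.toFinset)).permutations.length : ℕ) : ℝ) := by
    have := perms_ne_nil (XList I.G I.prm.icl (I.G.verts \ Cnat.biUnion List.toFinset))
    exact_mod_cast List.length_pos_iff.mpr this
  rw [div_le_div_iff₀ hlen hlen]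
  apply mul_le_mul_of_nonneg_right _ (le_of_lt hlen)
  apply List.sum_le_sum
  intro ord hord
  have hord' : ∀ c ∈ ord, XCond I.G I.prm.icl (I.G.verts \ Cnat.biUnion List.toFinset) c := by
    intro c hc
    exact mem_XList.mp ((List.mem_permutations.mp hord).mem_iff.mp hc)
  obtain ⟨h1, h2, h3⟩ := greedy_inv_full I.G I.prm.icl Cnat ord hord'
  rw [stepExp_eq I.G Γ' i _ Cnat h1 h2 h3, stepExp_eq I.G I.prm i _ Cnat h1 h2 h3]
  have hEE : EE I.G Γ' i (greedy [] ord) ≤ EE I.G I.prm i (greedy [] ord) := by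
    apply List.sum_le_sum
    intro C hC
    exact contrib_mono hle
  linarith

end Decomp

/-- For a maximum national packing, country `i`'s utility is at least its
internal optimum. -/
lemma natSize_le_packUtil (I : IKEP) (i : Fin I.n) {Cnat : Finset (List ℕ)}
    (hmax : IsMaxNatPacking I.G I.prm.ncl Cnat) :
    natSize I i ≤ packUtil I.G i Cnat := by
  unfold natSize
  apply csSup_le
  · exact ⟨0, ∅, by simp [IsPacking], by simp, by simp, by simp [packSize]⟩
  rintro m ⟨P, hP, hnatP, hlenP, rfl⟩
  classical
  set A := Cnat.filter (fun l => IsNationalTo I.G l i) with hA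
  set B := Cnat.filter (fun l => ¬ IsNationalTo I.G l i) with hB
  have hBsub : B ⊆ Cnat := Finset.filter_subset _ _
  have hPB : Disjoint P B := by
    rw [Finset.disjoint_left]
    intro l hlP hlB
    exact (Finset.mem_filter.mp hlB).2 (hnatP l hlP)
  -- cross-country disjointness
  have hcross : ∀ l ∈ P, ∀ l' ∈ B, ∀ v ∈ l, v ∉ l' := by
    intro l hl l' hl' v hv hv'
    have hli : I.G.country v = i := hnatP l hl v hv
    obtain ⟨j, hj, _⟩ := hmax.1.2 l' (hBsub hl')
    have hne : l' ≠ [] := by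
      intro h
      have := (hmax.1.1.1 l' (hBsub hl')).1
      rw [h] at this
      simp at this
    have hji : j ≠ i := by
      intro h
      exact (Finset.mem_filter.mp hl').2 (h ▸ hj)
    exact hji (by rw [← hj v hv', hli])
  have hQpack : IsNatPacking I.G I.prm.ncl (P ∪ B) := by
    refine ⟨⟨?_, ?_⟩, ?_⟩
    · intro l hl
      rcases Finset.mem_union.mp hl with h | h
      · exact hP.1 l h
      · exact hmax.1.1.1 l (hBsub h)
    · intro l hl l' hl' hne v hv
      rcases Finset.mem_union.mp hl with h | h <;>
        rcases Finset.mem_union.mp hl' with h' | h'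
      · exact hP.2 l h l' h' hne v hv
      · exact hcross l h l' h' v hv
      · intro hv'
        exact hcross l' h' l h v hv' hv
      · exact hmax.1.1.2 l (hBsub h) l' (hBsub h') hne v hv
    · intro l hl
      rcases Finset.mem_union.mp hl with h | h
      · exact ⟨i, hnatP l h, hlenP l h⟩
      · exact hmax.1.2 l (hBsub h)
  have hle := hmax.2 _ hQpack
  have hQsize : packSize (P ∪ B) = packSize P + packSize B := by
    unfold packSize
    rw [Finset.sum_union hPB]
  have hCsize : packSize Cnat = packSize A + packSize B := by
    unfold packSize
    rw [← Finset.sum_filter_add_sum_filter_not Cnat (fun l => IsNationalTo I.G l i)]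
  have hApack : packSize A ≤ packUtil I.G i Cnat := by
    unfold packUtil packSize
    calc ∑ l ∈ A, l.length = ∑ l ∈ A, cycUtil I.G i l := by
          apply Finset.sum_congr rfl
          intro l hl
          have hnat := (Finset.mem_filter.mp hl).2
          unfold cycUtil
          rw [List.filter_eq_self.mpr (by intro a ha; simpa using hnat a ha)]
      _ ≤ ∑ l ∈ Cnat, cycUtil I.G i l :=
          Finset.sum_le_sum_of_subset (Finset.filter_subset _ _)
  omega
/-- The variant `ℳ'_order` of `ℳ_order`, in which Step 1
instead draws the maximum national `Γ`-cycle packing at random according to a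
fixed distribution `p*` (depending only on `(G, 𝒱)` and `ncl`), is
individually rational and incentive compatible. -/
theorem Morder'_IR_and_IC (p : NatPackingDist) :
    (∀ I : IKEP, ∀ i : Fin I.n, (natSize I i : ℝ) ≤ Morder'U p I i) ∧
      (∀ I : IKEP, ∀ i : Fin I.n, ∀ Γ' : Params I.n, ParamLE i Γ' I.prm →
        Morder'U p { I with prm := Γ' } i ≤ Morder'U p I i) := by
  constructor
  · intro I i
    unfold Morder'U Morder'Exp
    have hsum := p.sum_one I.n I.G I.prm.ncl
    calc (natSize I i : ℝ)
        = ((p.dist I.n I.G I.prm.ncl).sum fun _ q => q) * (natSize I i : ℝ) := by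
          rw [hsum]; ring
      _ = ∑ Cnat ∈ (p.dist I.n I.G I.prm.ncl).support,
            (p.dist I.n I.G I.prm.ncl) Cnat * (natSize I i : ℝ) := by
          rw [Finsupp.sum, Finset.sum_mul]
      _ ≤ ∑ Cnat ∈ (p.dist I.n I.G I.prm.ncl).support,
            (p.dist I.n I.G I.prm.ncl) Cnat *
              MorderExpFrom I Cnat (fun P => (packUtil I.G i P : ℝ)) := by
          apply Finset.sum_le_sum
          intro Cnat hCnat
          have hq0 : (p.dist I.n I.G I.prm.ncl) Cnat ≠ 0 := Finsupp.mem_support_iff.mp hCnat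
          have hqpos : 0 ≤ (p.dist I.n I.G I.prm.ncl) Cnat := p.nonneg _ _ _ _
          have hmax := p.supp _ _ _ _ hq0
          have h1 : (natSize I i : ℝ) ≤ (packUtil I.G i Cnat : ℝ) := by
            exact_mod_cast natSize_le_packUtil I i hmax
          exact mul_le_mul_of_nonneg_left (h1.trans (core_ir I i Cnat)) hqpos
      _ = (p.dist I.n I.G I.prm.ncl).sum fun Cnat q =>
            q * MorderExpFrom I Cnat (fun P => (packUtil I.G i P : ℝ)) := by
          rw [Finsupp.sum]
  · intro I i Γ' hle
    unfold Morder'U Morder'Exp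
    dsimp only
    rw [hle.2.1]
    rw [Finsupp.sum, Finsupp.sum]
    apply Finset.sum_le_sum
    intro Cnat hCnat
    have hqpos : 0 ≤ (p.dist I.n I.G I.prm.ncl) Cnat := p.nonneg _ _ _ _
    exact mul_le_mul_of_nonneg_left (core_ic I i Γ' hle Cnat) hqpos
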